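/- Let B be a Banach A-bimodule. If there exists a₀ ∈ A such that A** = a₀A** (product in the first Arens sense) and a₀ has the Rw*w-property, then Z_{B**}(A**) = A**. -/

import Mathlib

open Filter Topology

/-- `arensHalf m y''` is the map `z' ↦ m**(y'', z')`, where
`⟨m*(z', x), y⟩ = ⟨z', m(x,y)⟩` and `⟨m**(y'', z'), x⟩ = ⟨y'', m*(z', x)⟩`. -/
noncomputable def arensHalf {X Y Z : Type*} [NormedAddCommGroup X] [NormedSpace ℝ X]
    [NormedAddCommGroup Y] [NormedSpace ℝ Y] [NormedAddCommGroup Z] [NormedSpace ℝ Z]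
    (m : X →L[ℝ] Y →L[ℝ] Z) (y'' : (Y →L[ℝ] ℝ) →L[ℝ] ℝ) :
    (Z →L[ℝ] ℝ) →L[ℝ] (X →L[ℝ] ℝ) :=
  (ContinuousLinearMap.compL ℝ X (Y →L[ℝ] ℝ) ℝ y'').comp
    (((ContinuousLinearMap.compL ℝ X (Y →L[ℝ] Z) (Y →L[ℝ] ℝ)).flip m).comp
      (ContinuousLinearMap.compL ℝ Y Z ℝ))

/-- The first Arens extension `m*** : X** × Y** → Z**` of a bounded bilinear map `m`,
defined by `⟨m***(x'', y''), z'⟩ = ⟨x'', m**(y'', z')⟩`. -/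
noncomputable def arens {X Y Z : Type*} [NormedAddCommGroup X] [NormedSpace ℝ X]
    [NormedAddCommGroup Y] [NormedSpace ℝ Y] [NormedAddCommGroup Z] [NormedSpace ℝ Z]
    (m : X →L[ℝ] Y →L[ℝ] Z) (x'' : (X →L[ℝ] ℝ) →L[ℝ] ℝ) (y'' : (Y →L[ℝ] ℝ) →L[ℝ] ℝ) :
    (Z →L[ℝ] ℝ) →L[ℝ] ℝ :=
  x''.comp (arensHalf m y'')

/-- Canonical embedding of a normed space into its double dual. -/
noncomputable def incl {X : Type*} [NormedAddCommGroup X] [NormedSpace ℝ X] (x : X) :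
    (X →L[ℝ] ℝ) →L[ℝ] ℝ :=
  ContinuousLinearMap.apply ℝ ℝ x

/-- `f : E** → F**` is weak*-to-weak* continuous. -/
def WWCont {E F : Type*} [NormedAddCommGroup E] [NormedSpace ℝ E]
    [NormedAddCommGroup F] [NormedSpace ℝ F]
    (f : ((E →L[ℝ] ℝ) →L[ℝ] ℝ) → ((F →L[ℝ] ℝ) →L[ℝ] ℝ)) : Prop :=
  ∀ (l : Filter ((E →L[ℝ] ℝ) →L[ℝ] ℝ)) (u : (E →L[ℝ] ℝ) →L[ℝ] ℝ),
    (∀ φ : E →L[ℝ] ℝ, Filter.Tendsto (fun v => v φ) l (nhds (u φ))) →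
    ∀ ψ : F →L[ℝ] ℝ, Filter.Tendsto (fun v => f v ψ) l (nhds (f u ψ))

section Aux

lemma incl_apply {X : Type*} [NormedAddCommGroup X] [NormedSpace ℝ X] (x : X) (f : X →L[ℝ] ℝ) :
    incl x f = f x := rfl

lemma isometry_incl {X : Type*} [NormedAddCommGroup X] [NormedSpace ℝ X] :
    Isometry (incl : X → (X →L[ℝ] ℝ) →L[ℝ] ℝ) :=
  (NormedSpace.inclusionInDoubleDualLi ℝ (E := X)).isometry

lemma arensHalf_apply {X Y Z : Type*} [NormedAddCommGroup X] [NormedSpace ℝ X]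
    [NormedAddCommGroup Y] [NormedSpace ℝ Y] [NormedAddCommGroup Z] [NormedSpace ℝ Z]
    (m : X →L[ℝ] Y →L[ℝ] Z) (y'' : (Y →L[ℝ] ℝ) →L[ℝ] ℝ) (z' : Z →L[ℝ] ℝ) (x : X) :
    arensHalf m y'' z' x = y'' (z'.comp (m x)) := by
  simp [arensHalf, ContinuousLinearMap.compL_apply]

lemma arens_incl_apply {X Y Z : Type*} [NormedAddCommGroup X] [NormedSpace ℝ X]
    [NormedAddCommGroup Y] [NormedSpace ℝ Y] [NormedAddCommGroup Z] [NormedSpace ℝ Z]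
    (m : X →L[ℝ] Y →L[ℝ] Z) (x : X) (y'' : (Y →L[ℝ] ℝ) →L[ℝ] ℝ) (z' : Z →L[ℝ] ℝ) :
    arens m (incl x) y'' z' = y'' (z'.comp (m x)) := by
  show incl x (arensHalf m y'' z') = _
  rw [incl_apply]
  exact arensHalf_apply m y'' z' x

noncomputable def buildSeq {β : Type*} (step : (n : ℕ) → ((i : ℕ) → i < n → β) → β) : ℕ → β
  | n => step n (fun i _ => buildSeq step i)

lemma buildSeq_eq {β : Type*} (step : (n : ℕ) → ((i : ℕ) → i < n → β) → β) (n : ℕ) :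
    buildSeq step n = step n (fun i _ => buildSeq step i) := by
  rw [buildSeq]

lemma ulim_functional {E : Type*} [NormedAddCommGroup E] [NormedSpace ℝ E]
    (U : Ultrafilter ℕ) (T : ℕ → (E →L[ℝ] ℝ)) (C : ℝ) (hC : ∀ n x, |T n x| ≤ C * ‖x‖) :
    ∃ f : E →L[ℝ] ℝ, ∀ x, Filter.Tendsto (fun n => T n x) (U : Filter ℕ) (nhds (f x)) := by
  have hex : ∀ x : E, ∃ L : ℝ, Filter.Tendsto (fun n => T n x) (U : Filter ℕ) (nhds L) := by
    intro x
    have hmem : ∀ n, T n x ∈ Set.Icc (-(C * ‖x‖)) (C * ‖x‖) := by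
      intro n
      have := hC n x
      constructor <;> [linarith [neg_abs_le (T n x)]; linarith [le_abs_self (T n x)]]
    have hle : (U.map (fun n => T n x) : Filter ℝ) ≤ Filter.principal (Set.Icc (-(C * ‖x‖)) (C * ‖x‖)) := by
      rw [Filter.le_principal_iff]
      exact Filter.mem_map.2 (Filter.univ_mem' hmem)
    obtain ⟨a, -, ha⟩ := (isCompact_Icc (a := -(C * ‖x‖)) (b := C * ‖x‖)).ultrafilter_le_nhds
      (U.map (fun n => T n x)) hle
    exact ⟨a, ha⟩
  choose L hL using hex
  have hadd : ∀ x y, L (x + y) = L x + L y := by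
    intro x y
    refine tendsto_nhds_unique (f := fun n => T n (x + y)) (l := (U : Filter ℕ)) ?_ ?_
    · exact hL (x + y)
    · have := (hL x).add (hL y)
      simpa [map_add] using this
  have hsmul : ∀ (c : ℝ) x, L (c • x) = c * L x := by
    intro c x
    refine tendsto_nhds_unique (f := fun n => T n (c • x)) (l := (U : Filter ℕ)) ?_ ?_
    · exact hL (c • x)
    · have := (hL x).const_mul c
      simpa [map_smul, smul_eq_mul] using this
  have hbound : ∀ x, ‖L x‖ ≤ C * ‖x‖ := by
    intro x
    have hcl : IsClosed {y : ℝ | ‖y‖ ≤ C * ‖x‖} := isClosed_le (continuous_norm) continuous_const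
    exact hcl.mem_of_tendsto (hL x) (Filter.Eventually.of_forall fun n => by
      simpa [Real.norm_eq_abs] using hC n x)
  refine ⟨LinearMap.mkContinuous
    { toFun := L, map_add' := hadd, map_smul' := by intro c x; simpa using hsmul c x } C hbound,
    fun x => hL x⟩

lemma sep_functional {E : Type*} [NormedAddCommGroup E] [NormedSpace ℝ E] (p : Submodule ℝ E)
    (hp : IsClosed (p : Set E)) (x : E) (hx : x ∉ p) :
    ∃ Φ : E →L[ℝ] ℝ, (∀ y ∈ p, Φ y = 0) ∧ 0 < Φ x := by
  obtain ⟨f, u, hfu, hux⟩ := geometric_hahn_banach_closed_point p.convex hp hx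
  have hzero : ∀ y ∈ p, f y = 0 := by
    intro y hy
    by_contra hne
    have h1 : f (((|u| + 1) / f y) • y) < u := hfu _ (p.smul_mem _ hy)
    rw [map_smul, smul_eq_mul, div_mul_cancel₀ _ hne] at h1
    have : u ≤ |u| := le_abs_self u
    linarith
  have h0 : (0 : ℝ) < u := by
    have := hfu 0 p.zero_mem
    simpa using this
  exact ⟨f, hzero, lt_trans h0 hux⟩

/-- Helly / finite Goldstine: one can realize the values of `x''` on finitely many
functionals by an element of `X` of essentially the same norm. -/
lemma helly {X : Type*} [NormedAddCommGroup X] [NormedSpace ℝ X]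
    (x'' : (X →L[ℝ] ℝ) →L[ℝ] ℝ) {k : ℕ} (g : Fin k → (X →L[ℝ] ℝ)) {ε : ℝ} (hε : 0 < ε) :
    ∃ b : X, (∀ i, g i b = x'' (g i)) ∧ ‖b‖ ≤ ‖x''‖ + ε := by
  classical
  -- the bundled "evaluation" map into ℝ^k
  set T : X →L[ℝ] (Fin k → ℝ) := ContinuousLinearMap.pi g with hT
  set y : Fin k → ℝ := fun i => x'' (g i) with hy
  -- Step 1: y is in the range of T
  have hyV : y ∈ LinearMap.range (T : X →ₗ[ℝ] (Fin k → ℝ)) := by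
    by_contra hyV
    have hcl : IsClosed ((LinearMap.range (T : X →ₗ[ℝ] (Fin k → ℝ))) : Set (Fin k → ℝ)) :=
      Submodule.closed_of_finiteDimensional _
    obtain ⟨φ, hφ0, hφy⟩ := sep_functional _ hcl y hyV
    -- φ = ∑ i, (φ δᵢ) * ·
    have hφ : ∀ v : Fin k → ℝ, φ v = ∑ i, v i * φ (fun j => if i = j then (1:ℝ) else 0) := by
      intro v
      conv_lhs => rw [pi_eq_sum_univ v]
      rw [map_sum]
      refine Finset.sum_congr rfl fun i _ => ?_
      rw [map_smul, smul_eq_mul]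
    set c : Fin k → ℝ := fun i => φ (fun j => if i = j then (1:ℝ) else 0) with hc
    have hsum0 : (∑ i, c i • g i) = (0 : X →L[ℝ] ℝ) := by
      ext b
      have h0 : φ (T b) = 0 := hφ0 _ ⟨b, rfl⟩
      rw [hφ (T b)] at h0
      simpa [hT, ContinuousLinearMap.pi_apply, mul_comm] using h0
    have h1 : x'' (∑ i, c i • g i) = ∑ i, c i * x'' (g i) := by
      rw [map_sum]
      refine Finset.sum_congr rfl fun i _ => ?_
      rw [map_smul, smul_eq_mul]
    rw [hsum0, map_zero] at h1
    have h2 : φ y = ∑ i, c i * x'' (g i) := by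
      rw [hφ y]
      exact Finset.sum_congr rfl fun i _ => by rw [hy, mul_comm]
    rw [← h1] at h2
    exact absurd h2 (ne_of_gt hφy)
  obtain ⟨b₀, hb₀⟩ := hyV
  have hb₀i : ∀ i, g i b₀ = x'' (g i) := fun i => congrFun hb₀ i
  -- Step 2: norm control via the quotient by ker T
  set W : Submodule ℝ X := LinearMap.ker (T : X →ₗ[ℝ] (Fin k → ℝ)) with hW
  have hWcl : IsClosed (W : Set X) := ContinuousLinearMap.isClosed_ker T
  haveI : IsClosed (W : Set X) := hWcl
  -- quotient normed space
  by_cases hzero : (Submodule.Quotient.mk b₀ : X ⧸ W) = 0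
  ·
    have hb₀W : b₀ ∈ W := (Submodule.Quotient.mk_eq_zero W).1 hzero
    have : ∀ i, x'' (g i) = 0 := by
      intro i
      have := congrFun (LinearMap.mem_ker.1 hb₀W) i
      simp [hT, ContinuousLinearMap.pi_apply] at this
      rw [← hb₀i i]
      exact this
    refine ⟨0, fun i => by simp [this i], by rw [norm_zero]; positivity⟩
  · -- norming functional on the quotient
    obtain ⟨θ, hθ1, hθval⟩ := exists_dual_vector ℝ _ (norm_ne_zero_iff.mpr hzero)
    -- f := θ ∘ mk as a continuous functional on X
    set flin : X →ₗ[ℝ] ℝ := θ.toLinearMap.comp (W.mkQ) with hflin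
    have hfb : ∀ b : X, ‖flin b‖ ≤ 1 * ‖b‖ := by
      intro b
      have h1 : ‖θ (Submodule.Quotient.mk b)‖ ≤ ‖θ‖ * ‖(Submodule.Quotient.mk b : X ⧸ W)‖ :=
        θ.le_opNorm _
      have h2 : ‖(Submodule.Quotient.mk b : X ⧸ W)‖ ≤ ‖b‖ := Submodule.Quotient.norm_mk_le W b
      calc ‖flin b‖ = ‖θ (Submodule.Quotient.mk b)‖ := rfl
        _ ≤ ‖θ‖ * ‖b‖ := h1.trans (by rw [hθ1]; simpa using h2)
        _ = 1 * ‖b‖ := by rw [hθ1]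
    set f : X →L[ℝ] ℝ := LinearMap.mkContinuous flin 1 hfb with hf
    have hfnorm : ‖f‖ ≤ 1 := LinearMap.mkContinuous_norm_le flin zero_le_one hfb
    -- f vanishes on W, hence lies in the span of the g i
    have hker : (⨅ i, LinearMap.ker ((g i) : X →ₗ[ℝ] ℝ)) ≤ LinearMap.ker (f : X →ₗ[ℝ] ℝ) := by
      intro b hb
      simp only [Submodule.mem_iInf] at hb
      have hbW : b ∈ W := by
        rw [hW, LinearMap.mem_ker]
        ext i
        simpa [hT] using hb i
      have : f b = θ (Submodule.Quotient.mk b) := rfl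
      rw [LinearMap.mem_ker]
      show f b = 0
      rw [this, (Submodule.Quotient.mk_eq_zero W).2 hbW, map_zero]
    have hspan : (f : X →ₗ[ℝ] ℝ) ∈ Submodule.span ℝ (Set.range (fun i => ((g i) : X →ₗ[ℝ] ℝ))) :=
      mem_span_of_iInf_ker_le_ker hker
    obtain ⟨c, hcf⟩ := (Submodule.mem_span_range_iff_exists_fun ℝ).1 hspan
    have hfc : ∀ b, f b = ∑ i, c i * g i b := by
      intro b
      have := congrArg (fun (h : X →ₗ[ℝ] ℝ) => h b) hcf
      simpa [LinearMap.sum_apply, smul_eq_mul] using this.symm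
    -- quotient norm = x'' f ≤ ‖x''‖
    have hq : ‖(Submodule.Quotient.mk b₀ : X ⧸ W)‖ ≤ ‖x''‖ := by
      have hfCLM : f = ∑ i, c i • g i := by
        ext b; rw [hfc b]; simp [smul_eq_mul]
      have hx''f : x'' f = ∑ i, c i * x'' (g i) := by
        rw [hfCLM, map_sum]
        exact Finset.sum_congr rfl fun i _ => by rw [map_smul, smul_eq_mul]
      have hfb₀ : f b₀ = ∑ i, c i * x'' (g i) := by
        rw [hfc b₀]
        exact Finset.sum_congr rfl fun i _ => by rw [hb₀i i]
      have hθval' : θ (Submodule.Quotient.mk b₀) = ‖(Submodule.Quotient.mk b₀ : X ⧸ W)‖ := by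
        exact_mod_cast hθval
      have hval : ‖(Submodule.Quotient.mk b₀ : X ⧸ W)‖ = x'' f := by
        have : f b₀ = θ (Submodule.Quotient.mk b₀) := rfl
        rw [← hθval', ← this, hfb₀, hx''f]
      rw [hval]
      calc x'' f ≤ |x'' f| := le_abs_self _
        _ ≤ ‖x''‖ * ‖f‖ := by simpa [Real.norm_eq_abs] using x''.le_opNorm f
        _ ≤ ‖x''‖ * 1 := by
            exact mul_le_mul_of_nonneg_left hfnorm (norm_nonneg x'')
        _ = ‖x''‖ := mul_one _
    -- pick a good representative
    obtain ⟨b, hbmk, hbnorm⟩ := Submodule.Quotient.norm_mk_lt (Submodule.Quotient.mk b₀ : X ⧸ W) hε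
    have hbW : b - b₀ ∈ W := (Submodule.Quotient.eq W).1 hbmk
    refine ⟨b, ?_, ?_⟩
    · intro i
      have := congrFun (LinearMap.mem_ker.1 hbW) i
      simp only [hT, ContinuousLinearMap.coe_coe, ContinuousLinearMap.pi_apply, map_sub,
        Pi.zero_apply] at this
      have hgi : g i b - g i b₀ = 0 := by simpa [hT, ContinuousLinearMap.pi_apply] using this
      rw [← hb₀i i]
      linarith [hgi]
    · have hlt : ‖b‖ < ‖x''‖ + ε := lt_of_lt_of_le hbnorm (by linarith [hq])
      exact hlt.le

end Aux

set_option maxHeartbeats 2000000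

/-- Main step: under the factorization and Rw*w hypotheses, every element of `A**`
is in the canonical image of `A`. -/
lemma exists_incl_eq {A : Type*} [NonUnitalNormedRing A] [NormedSpace ℝ A]
    [IsScalarTower ℝ A A] [SMulCommClass ℝ A A] [CompleteSpace A] (a₀ : A)
    (a'' x'' : (A →L[ℝ] ℝ) →L[ℝ] ℝ)
    (hx : a'' = arens (ContinuousLinearMap.mul ℝ A) (incl a₀) x'')
    (hR : ∀ {ι : Type} (l : Filter ι), l.NeBot → ∀ a' : ι → (A →L[ℝ] ℝ),
      (∀ a : A, Filter.Tendsto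
        (fun i => ((a' i).comp (ContinuousLinearMap.mul ℝ A a₀)) a) l (nhds (0 : ℝ))) →
      ∀ F : (A →L[ℝ] ℝ) →L[ℝ] ℝ, Filter.Tendsto
        (fun i => F ((a' i).comp (ContinuousLinearMap.mul ℝ A a₀))) l (nhds (0 : ℝ))) :
    ∃ c : A, a'' = incl c := by
  classical
  by_contra hne
  push_neg at hne
  -- the canonical image of A as a closed submodule of A**
  set J : A →L[ℝ] ((A →L[ℝ] ℝ) →L[ℝ] ℝ) := ContinuousLinearMap.apply ℝ ℝ with hJ
  set p : Submodule ℝ ((A →L[ℝ] ℝ) →L[ℝ] ℝ) := LinearMap.range (J : A →ₗ[ℝ] _) with hp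
  have hpr : (p : Set ((A →L[ℝ] ℝ) →L[ℝ] ℝ)) = Set.range (incl : A → _) := by
    ext v; constructor
    · rintro ⟨c, rfl⟩; exact ⟨c, rfl⟩
    · rintro ⟨c, rfl⟩; exact ⟨c, rfl⟩
  have hclosed : IsClosed (p : Set ((A →L[ℝ] ℝ) →L[ℝ] ℝ)) := by
    rw [hpr]
    exact isometry_incl.isClosedEmbedding.isClosed_range
  have hmemp : a'' ∉ p := by
    intro hmem
    obtain ⟨c, hc⟩ := hmem
    exact hne c hc.symm
  obtain ⟨Φ, hΦ0, hΦa⟩ := sep_functional p hclosed a'' hmemp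
  -- evaluation of a'' through x''
  have a''app : ∀ w : A →L[ℝ] ℝ,
      a'' w = x'' (w.comp (ContinuousLinearMap.mul ℝ A a₀)) := by
    intro w
    rw [hx]
    exact arens_incl_apply _ _ _ _
  -- interleaved sequences via Helly
  have ex : ∀ (n : ℕ) (prev : (i : ℕ) → i < n → ((A →L[ℝ] ℝ) × A)),
      ∃ q : (A →L[ℝ] ℝ) × A,
        a'' q.1 = Φ a'' ∧ ‖q.1‖ ≤ ‖Φ‖ + 1 ∧
        (∀ i (h : i < n), q.1 (a₀ * (prev i h).2) = 0) ∧
        (∀ i (h : i < n), (prev i h).1 (a₀ * q.2) = a'' ((prev i h).1)) ∧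
        q.1 (a₀ * q.2) = a'' q.1 ∧ ‖q.2‖ ≤ ‖x''‖ + 1 := by
    intro n prev
    obtain ⟨fn, hfn, hfnnorm⟩ := helly Φ (k := n + 1)
      (Fin.cons a'' (fun i : Fin n => incl (a₀ * (prev i.1 i.2).2))) one_pos
    have hfn0 : a'' fn = Φ a'' := by simpa using hfn 0
    have hfni : ∀ i (h : i < n), fn (a₀ * (prev i h).2) = 0 := by
      intro i h
      have := hfn (Fin.succ ⟨i, h⟩)
      rw [Fin.cons_succ] at this
      rw [← incl_apply (a₀ * (prev i h).2) fn, this]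
      exact hΦ0 _ ⟨a₀ * (prev i h).2, rfl⟩
    obtain ⟨bn, hbn, hbnnorm⟩ := helly x'' (k := n + 1)
      (Fin.cons (fn.comp (ContinuousLinearMap.mul ℝ A a₀))
        (fun i : Fin n => ((prev i.1 i.2).1).comp (ContinuousLinearMap.mul ℝ A a₀))) one_pos
    have hbn0 : fn (a₀ * bn) = a'' fn := by
      have := hbn 0
      rw [Fin.cons_zero] at this
      rw [a''app fn]
      simpa [ContinuousLinearMap.mul_apply'] using this
    have hbni : ∀ i (h : i < n), (prev i h).1 (a₀ * bn) = a'' ((prev i h).1) := by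
      intro i h
      have := hbn (Fin.succ ⟨i, h⟩)
      rw [Fin.cons_succ] at this
      rw [a''app ((prev i h).1)]
      simpa [ContinuousLinearMap.mul_apply'] using this
    exact ⟨(fn, bn), hfn0, hfnnorm, hfni, hbni, hbn0, hbnnorm⟩
  choose step hstep using ex
  set s : ℕ → ((A →L[ℝ] ℝ) × A) := buildSeq step with hs
  have hspec : ∀ n,
      a'' (s n).1 = Φ a'' ∧ ‖(s n).1‖ ≤ ‖Φ‖ + 1 ∧
      (∀ i (h : i < n), (s n).1 (a₀ * (s i).2) = 0) ∧
      (∀ i (h : i < n), (s i).1 (a₀ * (s n).2) = a'' ((s i).1)) ∧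
      (s n).1 (a₀ * (s n).2) = a'' ((s n).1) ∧ ‖(s n).2‖ ≤ ‖x''‖ + 1 := by
    intro n
    have h := hstep n (fun i _ => s i)
    rw [hs, buildSeq_eq step n]
    exact h
  set fs : ℕ → (A →L[ℝ] ℝ) := fun n => (s n).1 with hfs
  set bs : ℕ → A := fun n => (s n).2 with hbs
  have h1 : ∀ n, a'' (fs n) = Φ a'' := fun n => (hspec n).1
  have h6 : ∀ n, ‖fs n‖ ≤ ‖Φ‖ + 1 := fun n => (hspec n).2.1
  have h2 : ∀ n i, i < n → fs n (a₀ * bs i) = 0 := fun n i h => (hspec n).2.2.1 i h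
  have h3 : ∀ n i, i < n → fs i (a₀ * bs n) = a'' (fs i) := fun n i h => (hspec n).2.2.2.1 i h
  have h4 : ∀ n, fs n (a₀ * bs n) = a'' (fs n) := fun n => (hspec n).2.2.2.2.1
  have h5 : ∀ n, ‖bs n‖ ≤ ‖x''‖ + 1 := fun n => (hspec n).2.2.2.2.2
  -- ultrafilter limits
  set U : Ultrafilter ℕ := Filter.hyperfilter ℕ with hU
  have hUcof : (U : Filter ℕ) ≤ Filter.cofinite := Filter.hyperfilter_le_cofinite
  obtain ⟨f, hf⟩ := ulim_functional U fs (‖Φ‖ + 1) (by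
    intro n x
    calc |fs n x| = ‖fs n x‖ := (Real.norm_eq_abs _).symm
      _ ≤ ‖fs n‖ * ‖x‖ := (fs n).le_opNorm x
      _ ≤ (‖Φ‖ + 1) * ‖x‖ := mul_le_mul_of_nonneg_right (h6 n) (norm_nonneg x))
  obtain ⟨F, hF⟩ := ulim_functional U (fun m => incl (bs m)) (‖x''‖ + 1) (by
    intro m w
    calc |incl (bs m) w| = ‖w (bs m)‖ := by rw [incl_apply, Real.norm_eq_abs]
      _ ≤ ‖w‖ * ‖bs m‖ := w.le_opNorm _
      _ ≤ ‖w‖ * (‖x''‖ + 1) := mul_le_mul_of_nonneg_left (h5 m) (norm_nonneg w)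
      _ = (‖x''‖ + 1) * ‖w‖ := mul_comm _ _)
  -- f vanishes on the a₀ * bs m
  have hgt : ∀ m : ℕ, {n : ℕ | m < n} ∈ (U : Filter ℕ) := by
    intro m
    refine hUcof ?_
    rw [Filter.mem_cofinite]
    have : {n : ℕ | m < n}ᶜ = Set.Iic m := by ext n; simp [Set.mem_Iic, not_lt]
    rw [this]
    exact Set.finite_Iic m
  have hge : ∀ n : ℕ, {m : ℕ | n ≤ m} ∈ (U : Filter ℕ) := by
    intro n
    refine hUcof ?_
    rw [Filter.mem_cofinite]
    have : {m : ℕ | n ≤ m}ᶜ = Set.Iio n := by ext m; simp [Set.mem_Iio, not_le]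
    rw [this]
    exact Set.finite_Iio n
  have hfzero : ∀ m, f (a₀ * bs m) = 0 := by
    intro m
    refine tendsto_nhds_unique (hf (a₀ * bs m)) ?_
    refine Filter.Tendsto.congr' ?_ (tendsto_const_nhds (x := (0:ℝ)))
    filter_upwards [hgt m] with n hn
    exact (h2 n m hn).symm
  -- the key constancy
  have hFconst : ∀ n, F ((fs n - f).comp (ContinuousLinearMap.mul ℝ A a₀)) = Φ a'' := by
    intro n
    set w : A →L[ℝ] ℝ := (fs n - f).comp (ContinuousLinearMap.mul ℝ A a₀) with hw
    refine tendsto_nhds_unique (f := fun m => incl (bs m) w) (l := (U : Filter ℕ)) ?_ ?_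
    · exact hF w
    · refine Filter.Tendsto.congr' ?_ (tendsto_const_nhds (x := Φ a''))
      filter_upwards [hge n] with m hm
      have hwm : incl (bs m) w = fs n (a₀ * bs m) - f (a₀ * bs m) := by
        rw [incl_apply, hw]
        simp [ContinuousLinearMap.mul_apply']
      rw [hwm, hfzero m, sub_zero]
      rcases eq_or_lt_of_le hm with heq | hlt
      · rw [← heq, h4 n, h1 n]
      · rw [h3 m n hlt, h1 n]
  -- apply the Rw*w hypothesis
  have hcon := hR (U : Filter ℕ) (Ultrafilter.neBot U) (fun n => fs n - f) (by
    intro a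
    have := (hf (a₀ * a)).sub_const (f (a₀ * a))
    rw [sub_self] at this
    refine this.congr ?_
    intro n
    simp [ContinuousLinearMap.mul_apply']) F
  have : Φ a'' = 0 := by
    refine tendsto_nhds_unique ?_ hcon
    refine Filter.Tendsto.congr' ?_ (tendsto_const_nhds (x := Φ a''))
    filter_upwards [] with n
    exact (hFconst n).symm
  linarith

/-- if `A** = a₀A**` (first Arens product) for some `a₀ ∈ A` with the
Rw*w-property, then `Z_{B**}(A**) = A**`. -/
theorem center_eq_of_factor_and_Rwsw {A B : Type*}
    [NonUnitalNormedRing A] [NormedSpace ℝ A] [IsScalarTower ℝ A A] [SMulCommClass ℝ A A]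
    [CompleteSpace A] [NormedAddCommGroup B] [NormedSpace ℝ B] [CompleteSpace B]
    (πl : A →L[ℝ] B →L[ℝ] B) (πr : B →L[ℝ] A →L[ℝ] B)
    (hl : ∀ (a₁ a₂ : A) (b : B), πl (a₁ * a₂) b = πl a₁ (πl a₂ b))
    (hr : ∀ (b : B) (a₁ a₂ : A), πr b (a₁ * a₂) = πr (πr b a₁) a₂)
    (hc : ∀ (a₁ : A) (b : B) (a₂ : A), πr (πl a₁ b) a₂ = πl a₁ (πr b a₂))
    (a₀ : A)
    (hfac : ∀ a'' : (A →L[ℝ] ℝ) →L[ℝ] ℝ, ∃ x'' : (A →L[ℝ] ℝ) →L[ℝ] ℝ,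
      a'' = arens (ContinuousLinearMap.mul ℝ A) (incl a₀) x'')
    (hR : ∀ {ι : Type} (l : Filter ι), l.NeBot → ∀ a' : ι → (A →L[ℝ] ℝ),
      (∀ a : A, Filter.Tendsto
        (fun i => ((a' i).comp (ContinuousLinearMap.mul ℝ A a₀)) a) l (nhds (0 : ℝ))) →
      ∀ F : (A →L[ℝ] ℝ) →L[ℝ] ℝ, Filter.Tendsto
        (fun i => F ((a' i).comp (ContinuousLinearMap.mul ℝ A a₀))) l (nhds (0 : ℝ))) :
    ∀ a'' : (A →L[ℝ] ℝ) →L[ℝ] ℝ,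
      WWCont (fun b'' : (B →L[ℝ] ℝ) →L[ℝ] ℝ => arens πl a'' b'') := by
  intro a''
  obtain ⟨x'', hx⟩ := hfac a''
  obtain ⟨c, rfl⟩ := exists_incl_eq a₀ a'' x'' hx hR
  intro l u hconv ψ
  have key : ∀ v : (B →L[ℝ] ℝ) →L[ℝ] ℝ, arens πl (incl c) v ψ = v (ψ.comp (πl c)) :=
    fun v => arens_incl_apply πl c v ψ
  simp only [key]
  exact hconv (ψ.comp (πl c))
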